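/- Let x : D × L → {0,1} be a feasible solution to the relaxed demand-based model (flow conservation for each demand, capacity constraints, and sub-path optimality constraints). For each origin s define y(s,e) = max over demands k with origin s of x(k,e), and f(s,e) = ∑ over demands k with origin s of d_k·x(k,e). Then (y,f) is a feasible solution to the relaxed origin-based model: f satisfies aggregated flow conservation (net outflow d_s = ∑_{k ∈ D_s} d_k at s, net inflow d_k at each destination t_k of D_s, balance elsewhere), f(s,e) ≤ y(s,e)·d_s for every edge, ∑_s f(s,e) ≤ c(e), and for each origin s, each node has at most one incoming edge with y = 1 (exactly one at destinations of D_s, none at s). -/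
import Mathlib


/-- From a feasible solution `x` of the relaxed demand-based model (per-demand acyclic
0-1 unit flows with conservation, capacity and sub-path optimality constraints), the
aggregates `y s e = max_{k : sk k = s} x k e` and `f s e = ∑_{k : sk k = s} d k * x k e`
form a feasible solution of the relaxed origin-based model: aggregated flow conservation,
flow bounds `f ≤ y · d_s`, capacity constraints, and in-degree constraints on `y`. -/

lemma no_incoming_at_source {V D : Type} [Fintype V] [DecidableEq V]
    (L : Finset (V × V)) (sk tk : D → V)
    (x : D → V × V → ℕ)
    (hx01 : ∀ k e, x k e ≤ 1)
    (hcons : ∀ k (i : V),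
      ∑ e ∈ L.filter (fun e => e.2 = i), (x k e : ℤ)
        - ∑ e ∈ L.filter (fun e => e.1 = i), (x k e : ℤ)
        = if i = sk k then -1 else if i = tk k then 1 else 0)
    (hacyc : ∀ k, ¬ ∃ C : List V, C ≠ [] ∧ C.Nodup ∧
      ∀ e ∈ C.zip (C.rotate 1), e ∈ L ∧ x k e = 1)
    (k : D) (e : V × V) (he : e ∈ L) (he2 : e.2 = sk k) : x k e = 0 := by
  classical
  by_contra h0
  have hx1 : x k e = 1 := le_antisymm (hx01 k e) (Nat.one_le_iff_ne_zero.2 h0)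
  set s := sk k with hs
  -- `In v` : v has an incoming support edge
  set In : V → Prop := fun v => ∃ u, (u, v) ∈ L ∧ x k (u, v) = 1 with hIn
  have hIn_s : In s := ⟨e.1, by rw [← he2]; exact ⟨he, hx1⟩⟩
  -- any non-source vertex with an outgoing support edge has an incoming one
  have step : ∀ v, (∃ w, (v, w) ∈ L ∧ x k (v, w) = 1) → v ≠ s → In v := by
    intro v ⟨w, hwL, hw1⟩ hvs
    have hout : (1 : ℤ) ≤ ∑ e ∈ L.filter (fun e => e.1 = v), (x k e : ℤ) := by
      refine Finset.single_le_sum (f := fun e => (x k e : ℤ)) (fun i _ => by positivity) ?_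
        |>.trans_eq' (by rw [hw1]; norm_num)
      exact Finset.mem_filter.2 ⟨hwL, rfl⟩
    have hc := hcons k v
    rw [if_neg hvs] at hc
    have hin : (1 : ℤ) ≤ ∑ e ∈ L.filter (fun e => e.2 = v), (x k e : ℤ) := by
      split_ifs at hc <;> omega
    by_contra hnIn
    have : ∑ e ∈ L.filter (fun e => e.2 = v), (x k e : ℤ) = 0 := by
      refine Finset.sum_eq_zero fun p hp => ?_
      obtain ⟨hpL, hp2⟩ := Finset.mem_filter.1 hp
      have : x k p ≠ 1 := fun h1 => hnIn ⟨p.1, by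
        rw [← hp2, Prod.mk.eta]; exact ⟨hpL, h1⟩⟩
      have := hx01 k p
      omega
    omega
  -- backwards walk
  set g : V → V := fun v => if h : In v then h.choose else v with hg
  have hgspec : ∀ v, In v → (g v, v) ∈ L ∧ x k (g v, v) = 1 := by
    intro v hv
    simp only [hg, dif_pos hv]
    exact hv.choose_spec
  set w : ℕ → V := fun n => g^[n] s with hw
  have hInw : ∀ n, In (w n) := by
    intro n
    induction n with
    | zero => exact hIn_s
    | succ n ih =>
      have hwn : w (n+1) = g (w n) := Function.iterate_succ_apply' g n s
      obtain ⟨hL, h1⟩ := hgspec _ ih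
      by_cases hgs : g (w n) = s
      · rw [hwn, hgs]; exact hIn_s
      · exact hwn ▸ step _ ⟨w n, hL, h1⟩ hgs
  have hedge : ∀ n, (w (n+1), w n) ∈ L ∧ x k (w (n+1), w n) = 1 := by
    intro n
    have hwn : w (n+1) = g (w n) := Function.iterate_succ_apply' g n s
    rw [hwn]; exact hgspec _ (hInw n)
  -- pigeonhole
  obtain ⟨a, b, hab, hwab⟩ := Finite.exists_ne_map_eq_of_infinite w
  have hex : ∃ j, ∃ i, i < j ∧ w i = w j := by
    rcases hab.lt_or_gt with h | h
    · exact ⟨b, a, h, hwab⟩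
    · exact ⟨a, b, h, hwab.symm⟩
  set j0 := Nat.find hex with hj0
  obtain ⟨i, hij, hwij⟩ := Nat.find_spec hex
  have hmin : ∀ a b, a < b → b < j0 → w a ≠ w b := by
    intro a b hab hbj heq
    exact Nat.find_min hex hbj ⟨a, hab, heq⟩
  set m := j0 - i with hm
  have hm1 : 1 ≤ m := by omega
  set C : List V := (List.range m).map (fun l => w (j0 - 1 - l)) with hC
  have hClen : C.length = m := by simp [hC]
  have hCget : ∀ (n : ℕ) (h : n < C.length), C[n] = w (j0 - 1 - n) := by
    intro n h
    simp [hC]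
  refine hacyc k ⟨C, ?_, ?_, ?_⟩
  · intro h; rw [h] at hClen; simp at hClen; omega
  · rw [List.nodup_iff_injective_getElem]
    intro ⟨n1, h1⟩ ⟨n2, h2⟩ heq
    simp only [Fin.getElem_fin] at heq
    rw [hCget n1 h1, hCget n2 h2] at heq
    rw [hClen] at h1 h2
    have : n1 = n2 := by
      by_contra hne
      rcases Nat.lt_or_ge n1 n2 with h | h
      · exact hmin _ _ (by omega) (by omega) heq.symm
      · exact hmin _ _ (by omega) (by omega) heq
    exact Fin.ext this
  · intro p hp
    rw [List.mem_iff_getElem] at hp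
    obtain ⟨n, hn, hpn⟩ := hp
    have hnm : n < m := by
      have := hn
      rw [List.length_zip, List.length_rotate, hClen] at this
      omega
    rw [List.getElem_zip, List.getElem_rotate, hCget, hCget] at hpn
    rw [hClen] at hpn
    rcases Nat.lt_or_ge n (m - 1) with hlt | hge
    · have h1 : (n + 1) % m = n + 1 := Nat.mod_eq_of_lt (by omega)
      rw [h1] at hpn
      have h2 : j0 - 1 - n = (j0 - 1 - (n+1)) + 1 := by omega
      rw [h2] at hpn
      exact hpn ▸ hedge _
    · have hn1 : n = m - 1 := by omega
      have h1 : (n + 1) % m = 0 := by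
        rw [hn1]; have : m - 1 + 1 = m := by omega
        rw [this, Nat.mod_self]
      rw [h1] at hpn
      have h2 : j0 - 1 - n = i := by omega
      have h3 : j0 - 1 - 0 = j0 - 1 := by omega
      rw [h2, h3, hwij] at hpn
      have h4 := hedge (j0 - 1)
      rw [show (j0 - 1) + 1 = j0 from by omega] at h4
      exact hpn ▸ h4

theorem demand_to_origin_feasible {V D : Type} [Fintype V] [DecidableEq V] [Fintype D] [DecidableEq D]
    (L : Finset (V × V)) (c : V × V → ℝ) (sk tk : D → V) (d : D → ℝ)
    (hd : ∀ k, 0 < d k) (hst : ∀ k, sk k ≠ tk k)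
    (x : D → V × V → ℕ)
    (hx01 : ∀ k e, x k e ≤ 1)
    (hcons : ∀ k (i : V),
      ∑ e ∈ L.filter (fun e => e.2 = i), (x k e : ℤ)
        - ∑ e ∈ L.filter (fun e => e.1 = i), (x k e : ℤ)
        = if i = sk k then -1 else if i = tk k then 1 else 0)
    (hacyc : ∀ k, ¬ ∃ C : List V, C ≠ [] ∧ C.Nodup ∧
      ∀ e ∈ C.zip (C.rotate 1), e ∈ L ∧ x k e = 1)
    (hcap : ∀ e ∈ L, ∑ k : D, d k * (x k e : ℝ) ≤ c e)
    (hsub : ∀ (s i : V), i ≠ s →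
      ∑ e ∈ L.filter (fun e => e.2 = i),
        (Finset.univ.filter (fun k => sk k = s)).sup (fun k => x k e) ≤ 1) :
    -- aggregated flow conservation
    (∀ (s i : V),
      ∑ e ∈ L.filter (fun e => e.2 = i),
          (∑ k ∈ Finset.univ.filter (fun k => sk k = s), d k * (x k e : ℝ))
        - ∑ e ∈ L.filter (fun e => e.1 = i),
          (∑ k ∈ Finset.univ.filter (fun k => sk k = s), d k * (x k e : ℝ))
        = (∑ k ∈ Finset.univ.filter (fun k => sk k = s ∧ tk k = i), d k)
          - (if i = s then ∑ k ∈ Finset.univ.filter (fun k => sk k = s), d k else 0))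
    -- flow bound constraints
    ∧ (∀ (s : V) (e : V × V),
        ∑ k ∈ Finset.univ.filter (fun k => sk k = s), d k * (x k e : ℝ)
          ≤ (((Finset.univ.filter (fun k => sk k = s)).sup (fun k => x k e) : ℕ) : ℝ)
            * ∑ k ∈ Finset.univ.filter (fun k => sk k = s), d k)
    -- capacity constraints
    ∧ (∀ e ∈ L,
        ∑ s : V, ∑ k ∈ Finset.univ.filter (fun k => sk k = s), d k * (x k e : ℝ) ≤ c e)
    -- in-degree (path uniqueness) constraints on y
    ∧ (∀ (s i : V),
        (i = s → ∑ e ∈ L.filter (fun e => e.2 = i),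
          (Finset.univ.filter (fun k => sk k = s)).sup (fun k => x k e) = 0)
        ∧ ((∃ k, sk k = s ∧ tk k = i) → ∑ e ∈ L.filter (fun e => e.2 = i),
            (Finset.univ.filter (fun k => sk k = s)).sup (fun k => x k e) = 1)
        ∧ (i ≠ s → ∑ e ∈ L.filter (fun e => e.2 = i),
            (Finset.univ.filter (fun k => sk k = s)).sup (fun k => x k e) ≤ 1)) := by
    classical
  refine ⟨?_, ?_, ?_, ?_⟩
  · -- aggregated flow conservation
    intro s i
    have swap1 : ∑ e ∈ L.filter (fun e => e.2 = i),
          (∑ k ∈ Finset.univ.filter (fun k => sk k = s), d k * (x k e : ℝ))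
        = ∑ k ∈ Finset.univ.filter (fun k => sk k = s),
          ∑ e ∈ L.filter (fun e => e.2 = i), d k * (x k e : ℝ) := Finset.sum_comm
    have swap2 : ∑ e ∈ L.filter (fun e => e.1 = i),
          (∑ k ∈ Finset.univ.filter (fun k => sk k = s), d k * (x k e : ℝ))
        = ∑ k ∈ Finset.univ.filter (fun k => sk k = s),
          ∑ e ∈ L.filter (fun e => e.1 = i), d k * (x k e : ℝ) := Finset.sum_comm
    rw [swap1, swap2, ← Finset.sum_sub_distrib]
    have key : ∀ k ∈ Finset.univ.filter (fun k => sk k = s),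
        (∑ e ∈ L.filter (fun e => e.2 = i), d k * (x k e : ℝ))
          - (∑ e ∈ L.filter (fun e => e.1 = i), d k * (x k e : ℝ))
        = (if i = s then -(d k) else if tk k = i then d k else 0) := by
      intro k hk
      have hks : sk k = s := by simpa using (Finset.mem_filter.1 hk).2
      have hc := hcons k i
      rw [hks] at hc
      rw [← Finset.mul_sum, ← Finset.mul_sum, ← mul_sub]
      have hR : (∑ e ∈ L.filter (fun e => e.2 = i), (x k e : ℝ))
            - ∑ e ∈ L.filter (fun e => e.1 = i), (x k e : ℝ)
          = (((∑ e ∈ L.filter (fun e => e.2 = i), (x k e : ℤ))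
            - ∑ e ∈ L.filter (fun e => e.1 = i), (x k e : ℤ) : ℤ) : ℝ) := by
        push_cast; ring
      rw [hR, hc]
      split_ifs with h1 h2 h3 h4
      · push_cast; ring
      · push_cast; ring
      · exact absurd h2.symm h3
      · exact absurd h4.symm h2
      · push_cast; ring
    rw [Finset.sum_congr rfl key]
    by_cases his : i = s
    · subst his
      have hempty : Finset.univ.filter (fun k => sk k = i ∧ tk k = i) = ∅ := by
        ext k
        simp only [Finset.mem_filter, Finset.mem_univ, true_and, Finset.notMem_empty,
          iff_false, not_and]
        intro h1 h2
        exact hst k (h1.trans h2.symm)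
      simp [hempty]
    · simp only [if_neg his, sub_zero]
      have hff : Finset.univ.filter (fun k => sk k = s ∧ tk k = i)
          = (Finset.univ.filter (fun k => sk k = s)).filter (fun k => tk k = i) := by
        rw [Finset.filter_filter]
      rw [hff]
      exact (Finset.sum_filter (fun k => tk k = i) d).symm
  · -- flow bounds
    intro s e
    rw [Finset.mul_sum]
    refine Finset.sum_le_sum fun k hk => ?_
    have hle : x k e ≤ (Finset.univ.filter (fun k => sk k = s)).sup (fun k => x k e) :=
      Finset.le_sup (f := fun k => x k e) hk
    have hleR : (x k e : ℝ)
        ≤ (((Finset.univ.filter (fun k => sk k = s)).sup (fun k => x k e) : ℕ) : ℝ) := by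
      exact_mod_cast hle
    calc d k * (x k e : ℝ) ≤ d k * _ := mul_le_mul_of_nonneg_left hleR (hd k).le
      _ = _ := mul_comm _ _
  · -- capacity
    intro e heL
    rw [Finset.sum_fiberwise]
    exact hcap e heL
  · -- in-degree constraints
    intro s i
    refine ⟨?_, ?_, fun h => hsub s i h⟩
    · intro his
      subst his
      refine Finset.sum_eq_zero fun e he => ?_
      obtain ⟨heL, he2⟩ := Finset.mem_filter.1 he
      refine Nat.le_zero.1 (Finset.sup_le fun k hk => ?_)
      have hks : sk k = i := by simpa using (Finset.mem_filter.1 hk).2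
      rw [no_incoming_at_source L sk tk x hx01 hcons hacyc k e heL (he2.trans hks.symm)]
    · rintro ⟨k0, hk0s, hk0t⟩
      have hit : i ≠ s := fun h => hst k0 (by rw [hk0s, hk0t, h])
      refine Nat.le_antisymm (hsub s i hit) ?_
      have hc := hcons k0 i
      rw [if_neg (by rw [hk0s]; exact hit), if_pos hk0t.symm] at hc
      have hout0 : (0 : ℤ) ≤ ∑ e ∈ L.filter (fun e => e.1 = i), (x k0 e : ℤ) :=
        Finset.sum_nonneg fun _ _ => Int.ofNat_nonneg _
      by_contra hlt
      push_neg at hlt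
      have hsum0 : ∑ e ∈ L.filter (fun e => e.2 = i),
          (Finset.univ.filter (fun k => sk k = s)).sup (fun k => x k e) = 0 :=
        Nat.lt_one_iff.1 hlt
      have hz : ∑ e ∈ L.filter (fun e => e.2 = i), (x k0 e : ℤ) = 0 := by
        refine Finset.sum_eq_zero fun e he => ?_
        have hsup := (Finset.sum_eq_zero_iff.1 hsum0) e he
        have hle : x k0 e ≤ (Finset.univ.filter (fun k => sk k = s)).sup (fun k => x k e) :=
          Finset.le_sup (f := fun k => x k e) (Finset.mem_filter.2 ⟨Finset.mem_univ _, hk0s⟩)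
        simp only [hsup, Nat.le_zero] at hle
        rw [hle]; rfl
      omega
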